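/- arXiv:2010.14033 — 7 statements merged into one kernel-verified Lean document; each statement's English description precedes it below -/
import Mathlib

section
/- Let P be an m-partition of a finite set X and let f ∈ T(X,P). Then f is unit-regular in T(X,P) (i.e., there exists a bijection g ∈ S(X,P) with f = f∘g∘f) if and only if for each index i in the image of the character map χ^(f), there exists an index j with |X_i| = |X_j| and X_i ∩ Xf = X_j f. -/
/-- `B : ι → Set X` is a partition of `X` into nonempty pairwise disjoint blocks. -/
def IsPartition {X ι : Type*} (B : ι → Set X) : Prop :=
  (∀ i, (B i).Nonempty) ∧ (Pairwise fun i j => Disjoint (B i) (B j)) ∧ (⋃ i, B i) = Set.univ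

/-- membership in `T(X,P)`: every block maps into some block. -/
def MapsInto {X ι : Type*} (B : ι → Set X) (f : X → X) : Prop := ∀ i, ∃ j, f '' B i ⊆ B j

/-- membership in `Γ(X,P)`: every block maps onto some block. -/
def MapsOnto {X ι : Type*} (B : ι → Set X) (f : X → X) : Prop := ∀ i, ∃ j, f '' B i = B j

/-- membership in `Σ(X,P)`. -/
def InSigma {X ι : Type*} (B : ι → Set X) (f : X → X) : Prop :=
  MapsInto B f ∧ ∀ i, (Set.range f ∩ B i).Nonempty

/-- membership in `S(X,P)`, the group of units of `T(X,P)`. -/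
def IsUnitT {X ι : Type*} (B : ι → Set X) (f : X → X) : Prop :=
  MapsInto B f ∧ ∃ g, MapsInto B g ∧ f ∘ g = id ∧ g ∘ f = id

/-- Stirling numbers of the second kind. -/
def stirling2 : ℕ → ℕ → ℕ
  | 0, 0 => 1
  | 0, _ + 1 => 0
  | _ + 1, 0 => 0
  | n + 1, k + 1 => (k + 1) * stirling2 n (k + 1) + stirling2 n k

section AuxUnitReg

lemma extend_perm {α : Type*} [Fintype α] [DecidableEq α] (c : α → ℕ) :
    ∀ (n : ℕ) (s : Finset α) (p : α → α), sᶜ.card = n → Set.InjOn p ↑s →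
      (∀ i ∈ s, c (p i) = c i) →
      ∃ σ : Equiv.Perm α, (∀ i ∈ s, σ i = p i) ∧ ∀ i, c (σ i) = c i := by
  intro n
  induction n with
  | zero =>
    intro s p hcard hinj hc
    have hs : s = Finset.univ := by
      have : sᶜ = ∅ := Finset.card_eq_zero.mp hcard
      simpa [Finset.compl_eq_empty_iff] using this
    subst hs
    have hinj' : Function.Injective p := fun a b hab => hinj (by simp) (by simp) hab
    have hbij : Function.Bijective p := Finite.injective_iff_bijective.mp hinj'
    exact ⟨Equiv.ofBijective p hbij, fun i _ => rfl, fun i => hc i (by simp)⟩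
  | succ n ih =>
    intro s p hcard hinj hc
    obtain ⟨i, hi⟩ : sᶜ.Nonempty := Finset.card_pos.mp (by omega)
    have his : i ∉ s := Finset.mem_compl.mp hi
    set cls : Finset α := Finset.univ.filter (fun a => c a = c i) with hcls
    set t : Finset α := s.filter (fun a => c a = c i) with ht
    set t' : Finset α := (s.image p).filter (fun a => c a = c i) with ht'
    have htt' : t' = t.image p := by
      ext y
      simp only [ht', ht, Finset.mem_filter, Finset.mem_image]
      constructor
      · rintro ⟨⟨x, hx, rfl⟩, hy⟩
        exact ⟨x, ⟨hx, by rw [← hc x hx]; exact hy⟩, rfl⟩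
      · rintro ⟨x, ⟨hx, hcx⟩, rfl⟩
        exact ⟨⟨x, hx, rfl⟩, by rw [hc x hx]; exact hcx⟩
    have hcard_tt' : t'.card = t.card := by
      rw [htt']
      exact Finset.card_image_of_injOn (hinj.mono (by
        intro a ha
        simp only [ht, Finset.coe_filter, Set.mem_setOf_eq] at ha
        exact ha.1))
    have htcls : t ⊂ cls := by
      constructor
      · intro a ha
        simp only [ht, Finset.mem_filter] at ha
        simp [hcls, ha.2]
      · intro hsub
        have : i ∈ t := hsub (by simp [hcls])
        rw [ht, Finset.mem_filter] at this
        exact his this.1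
    have hlt : t'.card < cls.card := hcard_tt' ▸ Finset.card_lt_card htcls
    have : (cls \ t').Nonempty := by
      rw [Finset.sdiff_nonempty]
      intro hsub
      exact absurd (Finset.card_le_card hsub) (by omega)
    obtain ⟨i', hi'⟩ := this
    have hi'cls : c i' = c i := by
      have := (Finset.mem_sdiff.mp hi').1
      simpa [hcls] using this
    have hi'nt : i' ∉ s.image p := by
      intro hmem
      exact (Finset.mem_sdiff.mp hi').2 (by simp [ht', Finset.mem_filter, hmem, hi'cls])
    set p' := Function.update p i i' with hp'
    have hps : ∀ a ∈ s, p' a = p a := fun a ha =>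
      Function.update_of_ne (fun h => his (by rwa [h] at ha)) _ _
    have hpi : p' i = i' := Function.update_self _ _ _
    have hinj' : Set.InjOn p' ↑(insert i s) := by
      intro a ha b hb hab
      simp only [Finset.coe_insert, Set.mem_insert_iff, Finset.mem_coe] at ha hb
      rcases ha with rfl | ha <;> rcases hb with rfl | hb
      · rfl
      · exfalso
        rw [hpi, hps b hb] at hab
        exact hi'nt (hab ▸ Finset.mem_image_of_mem p hb)
      · exfalso
        rw [hpi, hps a ha] at hab
        exact hi'nt (hab ▸ Finset.mem_image_of_mem p ha)
      · exact hinj ha hb (by rwa [hps a ha, hps b hb] at hab)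
    have hc' : ∀ a ∈ insert i s, c (p' a) = c a := by
      intro a ha
      rcases Finset.mem_insert.mp ha with rfl | ha
      · rw [hpi]; exact hi'cls
      · rw [hps a ha]; exact hc a ha
    have hcard' : (insert i s)ᶜ.card = n := by
      rw [Finset.compl_insert, Finset.card_erase_of_mem hi, hcard]
      omega
    obtain ⟨σ, hσ1, hσ2⟩ := ih (insert i s) p' hcard' hinj' hc'
    exact ⟨σ, fun a ha => (hσ1 a (Finset.mem_insert_of_mem ha)).trans (hps a ha), hσ2⟩


lemma exists_bijOn_extend {X : Type*} [Finite X] {s t R : Set X} (v : X → X)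
    (hcard : s.ncard = t.ncard) (hv : Set.MapsTo v (s ∩ R) t)
    (hinj : Set.InjOn v (s ∩ R)) :
    ∃ e : X → X, Set.BijOn e s t ∧ ∀ y ∈ s ∩ R, e y = v y := by
  classical
  set s₁ : Set X := s ∩ R with hs₁
  set t₁ : Set X := v '' s₁ with ht₁
  have ht₁t : t₁ ⊆ t := Set.image_subset_iff.mpr hv
  have hc1 : t₁.ncard = s₁.ncard := Set.ncard_image_of_injOn hinj
  have hc2 : (s \ s₁).ncard = (t \ t₁).ncard := by
    rw [Set.ncard_diff Set.inter_subset_left,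
        Set.ncard_diff ht₁t, hcard, hc1]
  have : Nonempty ((s \ s₁ : Set X) ≃ (t \ t₁ : Set X)) := by
    rw [← Finite.card_eq, Nat.card_coe_set_eq, Nat.card_coe_set_eq]
    exact hc2
  obtain ⟨g⟩ := this
  refine ⟨fun x => if hx : x ∈ s \ s₁ then (g ⟨x, hx⟩ : X) else v x, ⟨?_, ?_, ?_⟩, ?_⟩
  · -- MapsTo
    intro x hx
    by_cases hx2 : x ∈ s \ s₁
    · simp only [hx2, dif_pos]
      exact ((g ⟨x, hx2⟩).2).1
    · have hx1 : x ∈ s₁ := by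
        by_contra h
        exact hx2 ⟨hx, h⟩
      simp only [hx2, dif_neg, not_false_iff]
      exact hv hx1
  · -- InjOn
    intro a ha b hb hab
    by_cases ha2 : a ∈ s \ s₁ <;> by_cases hb2 : b ∈ s \ s₁
    · simp only [ha2, hb2, dif_pos] at hab
      exact Subtype.ext_iff.mp (g.injective (Subtype.ext hab))
    · exfalso
      have hb1 : b ∈ s₁ := by by_contra h; exact hb2 ⟨hb, h⟩
      simp only [ha2, hb2, dif_pos, dif_neg, not_false_iff] at hab
      have h1 : (g ⟨a, ha2⟩ : X) ∈ t \ t₁ := (g ⟨a, ha2⟩).2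
      exact h1.2 (hab ▸ Set.mem_image_of_mem v hb1)
    · exfalso
      have ha1 : a ∈ s₁ := by by_contra h; exact ha2 ⟨ha, h⟩
      simp only [ha2, hb2, dif_pos, dif_neg, not_false_iff] at hab
      have h1 : (g ⟨b, hb2⟩ : X) ∈ t \ t₁ := (g ⟨b, hb2⟩).2
      exact h1.2 (hab ▸ Set.mem_image_of_mem v ha1)
    · have ha1 : a ∈ s₁ := by by_contra h; exact ha2 ⟨ha, h⟩
      have hb1 : b ∈ s₁ := by by_contra h; exact hb2 ⟨hb, h⟩
      simp only [ha2, hb2, dif_neg, not_false_iff] at hab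
      exact hinj ha1 hb1 hab
  · -- SurjOn
    intro z hz
    by_cases hz1 : z ∈ t₁
    · obtain ⟨y, hy, rfl⟩ := hz1
      have hy2 : y ∉ s \ s₁ := fun h => h.2 hy
      exact ⟨y, hy.1, by simp only [hy2, dif_neg, not_false_iff]⟩
    · have hz2 : z ∈ t \ t₁ := ⟨hz, hz1⟩
      refine ⟨(g.symm ⟨z, hz2⟩ : X), (g.symm ⟨z, hz2⟩).2.1, ?_⟩
      simp only [(g.symm ⟨z, hz2⟩).2, dif_pos]
      rw [Subtype.coe_eta, g.apply_symm_apply]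
  · intro y hy
    have : y ∉ s \ s₁ := fun h => h.2 hy
    simp only [this, dif_neg, not_false_iff]

end AuxUnitReg

/-- Characterization of unit-regular elements of T(X,P) for finite X. -/
theorem unitRegular_iff_T {X : Type*} [Finite X] {m : ℕ} (B : Fin m → Set X)
    (hP : IsPartition B) (f : X → X) (hf : MapsInto B f) :
    (∃ u, IsUnitT B u ∧ f ∘ u ∘ f = f) ↔
      ∀ i, (∃ l, f '' B l ⊆ B i) →
        ∃ j, Nat.card (B i) = Nat.card (B j) ∧ B i ∩ Set.range f = f '' B j := by
  classical
  obtain ⟨hne, hdis, hcov⟩ := hP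
  have huniq : ∀ {x : X} {i j : Fin m}, x ∈ B i → x ∈ B j → i = j := by
    intro x i j hxi hxj
    by_contra hij
    exact Set.disjoint_left.mp (hdis hij) hxi hxj
  have hblk : ∀ x : X, ∃ i, x ∈ B i := by
    intro x
    have : x ∈ ⋃ i, B i := hcov.symm ▸ Set.mem_univ x
    exact Set.mem_iUnion.mp this
  set blk : X → Fin m := fun x => (hblk x).choose with hblkdef
  have hblk_mem : ∀ x, x ∈ B (blk x) := fun x => (hblk x).choose_spec
  set χ : Fin m → Fin m := fun i => (hf i).choose with hχdef
  have hχ : ∀ i, f '' B i ⊆ B (χ i) := fun i => (hf i).choose_spec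
  constructor
  · -- forward direction
    rintro ⟨u, ⟨hu, g, hg, hug, hgu⟩, hfu⟩ i ⟨l, hl⟩
    have hfux : ∀ x, f (u (f x)) = f x := fun x => congrFun hfu x
    have hugx : ∀ x, u (g x) = x := congrFun hug
    have hgux : ∀ x, g (u x) = x := congrFun hgu
    have huinj : Function.Injective u := Function.LeftInverse.injective hgux
    set σ : Fin m → Fin m := fun k => (hu k).choose with hσdef
    have hσ : ∀ k, u '' B k ⊆ B (σ k) := fun k => (hu k).choose_spec
    set τ : Fin m → Fin m := fun k => (hg k).choose with hτdef
    have hτ : ∀ k, g '' B k ⊆ B (τ k) := fun k => (hg k).choose_spec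
    have hτσ : ∀ k, τ (σ k) = k := by
      intro k
      obtain ⟨x, hx⟩ := hne k
      have h1 : u x ∈ B (σ k) := hσ k ⟨x, hx, rfl⟩
      have h2 : g (u x) ∈ B (τ (σ k)) := hτ _ ⟨u x, h1, rfl⟩
      rw [hgux x] at h2
      exact huniq h2 hx
    have himg : ∀ k, u '' B k = B (σ k) := by
      intro k
      apply Set.Subset.antisymm (hσ k)
      intro y hy
      have h2 : g y ∈ B (τ (σ k)) := hτ _ ⟨y, hy, rfl⟩
      rw [hτσ k] at h2
      exact ⟨g y, h2, hugx y⟩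
    refine ⟨σ i, ?_, ?_⟩
    · rw [Nat.card_coe_set_eq, Nat.card_coe_set_eq, ← himg i,
        Set.ncard_image_of_injective _ huinj]
    · have hχσ : χ (σ i) = i := by
        obtain ⟨z, hz⟩ := hne l
        have h1 : f z ∈ B i := hl ⟨z, hz, rfl⟩
        have h2 : u (f z) ∈ B (σ i) := hσ i ⟨f z, h1, rfl⟩
        have h3 : f (u (f z)) ∈ B (χ (σ i)) := hχ _ ⟨_, h2, rfl⟩
        rw [hfux z] at h3
        exact huniq h3 h1
      apply Set.Subset.antisymm
      · rintro y ⟨hyi, x, rfl⟩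
        exact ⟨u (f x), hσ i ⟨f x, hyi, rfl⟩, hfux x⟩
      · rintro y ⟨w, hw, rfl⟩
        exact ⟨hχσ ▸ hχ (σ i) ⟨w, hw, rfl⟩, w, rfl⟩
  · -- backward direction
    intro h
    set Imχ : Set (Fin m) := {i | ∃ l, f '' B l ⊆ B i} with hImχ
    have hrange : ∀ y ∈ Set.range f, blk y ∈ Imχ := by
      rintro y ⟨x, rfl⟩
      have h1 : f x ∈ B (χ (blk x)) := hχ _ ⟨x, hblk_mem x, rfl⟩
      have h2 : blk (f x) = χ (blk x) := huniq (hblk_mem (f x)) h1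
      exact ⟨blk x, h2 ▸ hχ (blk x)⟩
    set J : Fin m → Fin m := fun i => if hi : i ∈ Imχ then (h i hi).choose else i with hJ
    have hJcard : ∀ i ∈ Imχ, Nat.card (B i) = Nat.card (B (J i)) := by
      intro i hi
      simp only [hJ, dif_pos hi]
      exact (h i hi).choose_spec.1
    have hJset : ∀ i ∈ Imχ, B i ∩ Set.range f = f '' B (J i) := by
      intro i hi
      simp only [hJ, dif_pos hi]
      exact (h i hi).choose_spec.2
    have hIne : ∀ i ∈ Imχ, (B i ∩ Set.range f).Nonempty := by
      rintro i ⟨l, hl⟩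
      obtain ⟨z, hz⟩ := hne l
      exact ⟨f z, hl ⟨z, hz, rfl⟩, z, rfl⟩
    have hJinj : Set.InjOn J Imχ := by
      intro a ha b hb hab
      have h1 : B a ∩ Set.range f = B b ∩ Set.range f := by
        rw [hJset a ha, hJset b hb, hab]
      obtain ⟨y, hy1, hy2⟩ := hIne a ha
      have hy3 : y ∈ B b := by
        have : y ∈ B b ∩ Set.range f := by rw [← h1]; exact ⟨hy1, hy2⟩
        exact this.1
      exact huniq hy1 hy3
    obtain ⟨σ, hσJ, hσc⟩ := extend_perm (fun i => (B i).ncard) Imχ.toFinsetᶜ.card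
      Imχ.toFinset J rfl (by rw [Set.coe_toFinset]; exact hJinj)
      (by
        intro i hi
        rw [Set.mem_toFinset] at hi
        have := hJcard i hi
        rw [Nat.card_coe_set_eq, Nat.card_coe_set_eq] at this
        exact this.symm)
    have hσJ' : ∀ i ∈ Imχ, σ i = J i := fun i hi => hσJ i (Set.mem_toFinset.mpr hi)
    have hv : ∀ y ∈ Set.range f, y ∈ f '' B (J (blk y)) := by
      intro y hy
      rw [← hJset (blk y) (hrange y hy)]
      exact ⟨hblk_mem y, hy⟩
    set v : X → X := fun y => if hy : y ∈ Set.range f then (hv y hy).choose else y with hvdef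
    have hv1 : ∀ y (hy : y ∈ Set.range f), v y ∈ B (J (blk y)) ∧ f (v y) = y := by
      intro y hy
      simp only [hvdef, dif_pos hy]
      exact ⟨(hv y hy).choose_spec.1, (hv y hy).choose_spec.2⟩
    have he : ∀ i, ∃ e : X → X, Set.BijOn e (B i) (B (σ i)) ∧
        ∀ y ∈ B i ∩ Set.range f, e y = v y := by
      intro i
      apply exists_bijOn_extend
      · exact (hσc i).symm
      · rintro y ⟨hy1, hy2⟩
        have hby : blk y = i := huniq (hblk_mem y) hy1
        have h1 := (hv1 y hy2).1
        rw [hby] at h1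
        rwa [hσJ' i (hby ▸ hrange y hy2)]
      · rintro a ⟨_, ha2⟩ b ⟨_, hb2⟩ hab
        rw [← (hv1 a ha2).2, ← (hv1 b hb2).2, hab]
    set E : Fin m → X → X := fun i => (he i).choose with hE
    have hE1 : ∀ i, Set.BijOn (E i) (B i) (B (σ i)) := fun i => (he i).choose_spec.1
    have hE2 : ∀ i, ∀ y ∈ B i ∩ Set.range f, E i y = v y := fun i => (he i).choose_spec.2
    set u : X → X := fun x => E (blk x) x with hu
    have humem : ∀ {x : X} {i : Fin m}, x ∈ B i → u x ∈ B (σ i) := by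
      intro x i hx
      have hbx : blk x = i := huniq (hblk_mem x) hx
      show E (blk x) x ∈ B (σ i)
      rw [hbx]
      exact (hE1 i).1 hx
    have huinj : Function.Injective u := by
      intro a b hab
      have h1 : u a ∈ B (σ (blk a)) := humem (hblk_mem a)
      have h2 : u b ∈ B (σ (blk b)) := humem (hblk_mem b)
      have h3 : σ (blk a) = σ (blk b) := huniq h1 (hab ▸ h2)
      have h4 : blk a = blk b := σ.injective h3
      exact (hE1 (blk a)).2.1 (hblk_mem a) (h4 ▸ hblk_mem b)
        (by rw [hu] at hab; rw [show E (blk a) b = E (blk b) b from by rw [h4]]; exact hab)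
    have husurj : Function.Surjective u := by
      intro z
      have hz : z ∈ B (σ (σ.symm (blk z))) := by rw [Equiv.apply_symm_apply]; exact hblk_mem z
      obtain ⟨x, hx, hxz⟩ := (hE1 (σ.symm (blk z))).2.2 hz
      have hbx : blk x = σ.symm (blk z) := huniq (hblk_mem x) hx
      exact ⟨x, by rw [hu]; simp only; rw [hbx]; exact hxz⟩
    set uE : X ≃ X := Equiv.ofBijective u ⟨huinj, husurj⟩ with huE
    set g : X → X := ⇑uE.symm with hg
    have hug : u ∘ g = id := funext fun x => uE.apply_symm_apply x
    have hgu : g ∘ u = id := funext fun x => uE.symm_apply_apply x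
    have hgux : ∀ x, u (g x) = x := congrFun hug
    refine ⟨u, ⟨?_, g, ?_, hug, hgu⟩, ?_⟩
    · intro i
      refine ⟨σ i, ?_⟩
      rintro y ⟨x, hx, rfl⟩
      exact humem hx
    · intro k
      refine ⟨σ.symm k, ?_⟩
      rintro y ⟨z, hz, rfl⟩
      have h1 : u (g z) ∈ B (σ (blk (g z))) := humem (hblk_mem (g z))
      rw [hgux z] at h1
      have h2 : σ (blk (g z)) = k := huniq h1 hz
      have h3 : blk (g z) = σ.symm k := by rw [← h2, Equiv.symm_apply_apply]
      exact h3 ▸ hblk_mem (g z)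
    · funext x
      show f (u (f x)) = f x
      have hyr : f x ∈ Set.range f := ⟨x, rfl⟩
      have h1 : u (f x) = v (f x) := hE2 (blk (f x)) (f x) ⟨hblk_mem (f x), hyr⟩
      rw [h1, (hv1 (f x) hyr).2]
end

section
/- Let P be an m-partition of a finite set X. Then Γ(X,P) ∩ Σ(X,P) = S(X,P). -/
/-- For finite X, Γ(X,P) ∩ Σ(X,P) = S(X,P). -/
theorem gamma_inter_sigma_eq_units {X : Type*} [Finite X] {m : ℕ} (B : Fin m → Set X)
    (hP : IsPartition B) :
    ∀ f : X → X, (MapsOnto B f ∧ InSigma B f) ↔ IsUnitT B f := by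
  obtain ⟨hne, hdisj, hcov⟩ := hP
  have hmem : ∀ x : X, ∃ i, x ∈ B i := by
    intro x
    have : x ∈ ⋃ i, B i := hcov ▸ Set.mem_univ x
    exact Set.mem_iUnion.mp this
  have huniq : ∀ {x : X} {i j : Fin m}, x ∈ B i → x ∈ B j → i = j := by
    intro x i j hi hj
    by_contra h
    exact Set.disjoint_left.mp (hdisj h) hi hj
  intro f
  constructor
  · rintro ⟨hΓ, hT, hSig⟩
    choose σ hσ using hΓ
    have hσsurj : Function.Surjective σ := by
      intro j
      obtain ⟨y, ⟨x, rfl⟩, hy⟩ := hSig j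
      obtain ⟨i, hi⟩ := hmem x
      refine ⟨i, ?_⟩
      have : f x ∈ B (σ i) := hσ i ▸ ⟨x, hi, rfl⟩
      exact huniq this hy
    have hfsurj : Function.Surjective f := by
      intro y
      obtain ⟨j, hj⟩ := hmem y
      obtain ⟨i, rfl⟩ := hσsurj j
      obtain ⟨x, _, hx⟩ := (hσ i ▸ hj : y ∈ f '' B i)
      exact ⟨x, hx⟩
    have hfbij : Function.Bijective f := Finite.surjective_iff_bijective.mp hfsurj
    obtain ⟨g, hgf, hfg⟩ := Function.bijective_iff_has_inverse.mp hfbij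
    refine ⟨hT, g, ?_, funext hfg, funext hgf⟩
    intro j
    obtain ⟨i, rfl⟩ := hσsurj j
    refine ⟨i, ?_⟩
    rintro _ ⟨y, hy, rfl⟩
    obtain ⟨x, hx, rfl⟩ := (hσ i ▸ hy : y ∈ f '' B i)
    rwa [hgf x]
  · rintro ⟨hT, g, hTg, hfg, hgf⟩
    have hfg' : ∀ x, f (g x) = x := fun x => congrFun hfg x
    have hgf' : ∀ x, g (f x) = x := fun x => congrFun hgf x
    refine ⟨?_, hT, ?_⟩
    · intro i
      obtain ⟨j, hj⟩ := hT i
      refine ⟨j, Set.Subset.antisymm hj ?_⟩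
      obtain ⟨x0, hx0⟩ := hne i
      obtain ⟨k, hk⟩ := hTg j
      have hfx0 : f x0 ∈ B j := hj ⟨x0, hx0, rfl⟩
      have hx0k : x0 ∈ B k := by
        have := hk ⟨f x0, hfx0, rfl⟩
        rwa [hgf' x0] at this
      have hki : k = i := huniq hx0k hx0
      intro y hy
      have hgy : g y ∈ B i := hki ▸ hk ⟨y, hy, rfl⟩
      exact ⟨g y, hgy, hfg' y⟩
    · intro i
      obtain ⟨x, hx⟩ := hne i
      exact ⟨x, ⟨g x, hfg' x⟩, hx⟩
end

section
/- Let P = {X_i : i ∈ I} be a partition of an arbitrary set X and f ∈ Γ(X,P). Then f is regular in Γ(X,P) (there exists g ∈ Γ(X,P) with f = f∘g∘f) if and only if for every j in the image of χ^(f) there exists i ∈ I such that f restricted to X_i is an injective map from X_i onto X_j. -/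
/-- Characterization of regular elements of Γ(X,P) for an arbitrary set X. -/
theorem gamma_regular_iff {X ι : Type*} (B : ι → Set X) (hP : IsPartition B)
    (f : X → X) (hf : MapsOnto B f) :
    (∃ g, MapsOnto B g ∧ f ∘ g ∘ f = f) ↔
      ∀ j, (∃ l, f '' B l = B j) → ∃ i, f '' B i = B j ∧ Set.InjOn f (B i) := by
  classical
  obtain ⟨hne, hdisj, hcov⟩ := hP
  have hidx : ∀ x : X, ∃ j, x ∈ B j := by
    intro x
    have : x ∈ ⋃ i, B i := hcov ▸ Set.mem_univ x
    simpa [Set.mem_iUnion] using this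
  set idx : X → ι := fun x => (hidx x).choose with hidxdef
  have hmem : ∀ x, x ∈ B (idx x) := fun x => (hidx x).choose_spec
  have huniq : ∀ x j, x ∈ B j → idx x = j := by
    intro x j hj
    by_contra hne'
    exact Set.disjoint_left.mp (hdisj hne') (hmem x) hj
  constructor
  · rintro ⟨g, hg, hfgf⟩ j ⟨l, hl⟩
    obtain ⟨k, hk⟩ := hg j
    have key : ∀ y ∈ B j, f (g y) = y := by
      intro y hy
      rw [← hl] at hy
      obtain ⟨z, hz, rfl⟩ := hy
      exact congrFun hfgf z
    have himg : f '' B k = B j := by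
      ext y; constructor
      · rintro ⟨z, hz, rfl⟩
        rw [← hk] at hz
        obtain ⟨w, hw, rfl⟩ := hz
        rw [key w hw]; exact hw
      · intro hy
        refine ⟨g y, ?_, key y hy⟩
        rw [← hk]; exact ⟨y, hy, rfl⟩
    refine ⟨k, himg, ?_⟩
    intro a ha b hb hab
    rw [← hk] at ha hb
    obtain ⟨ya, hya, rfl⟩ := ha
    obtain ⟨yb, hyb, rfl⟩ := hb
    rw [key ya hya, key yb hyb] at hab
    rw [hab]
  · intro h
    set ImB : ι → Prop := fun j => ∃ l, f '' B l = B j with hImB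
    set I : ι → ι := fun j => if hj : ImB j then (h j hj).choose else j with hI
    have hIspec : ∀ j, ImB j → f '' B (I j) = B j ∧ Set.InjOn f (B (I j)) := by
      intro j hj
      simp only [hI, dif_pos hj]
      exact (h j hj).choose_spec
    set t : X → X := fun x => if ImB (idx x) then x else f x with ht
    have htfix : ∀ x, ImB (idx x) → t x = x := by
      intro x hx; simp only [ht, if_pos hx]
    have htI : ∀ x, ImB (idx (t x)) := by
      intro x
      by_cases hx : ImB (idx x)
      · rw [htfix x hx]; exact hx
      · obtain ⟨m, hm⟩ := hf (idx x)
        have hfx : f x ∈ B m := hm ▸ ⟨x, hmem x, rfl⟩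
        have h3 : idx (f x) = m := huniq _ _ hfx
        simp only [ht, if_neg hx, h3]
        exact ⟨idx x, hm⟩
    have hpre : ∀ x, ∃ y, y ∈ B (I (idx (t x))) ∧ f y = t x := by
      intro x
      have h1 := (hIspec _ (htI x)).1
      have h2 : t x ∈ f '' B (I (idx (t x))) := h1 ▸ hmem (t x)
      exact h2
    set g : X → X := fun x => (hpre x).choose with hg
    have hgmem : ∀ x, g x ∈ B (I (idx (t x))) := fun x => (hpre x).choose_spec.1
    have hgf : ∀ x, f (g x) = t x := fun x => (hpre x).choose_spec.2
    refine ⟨g, ?_, ?_⟩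
    · intro j
      by_cases hj : ImB j
      · refine ⟨I j, ?_⟩
        ext y; constructor
        · rintro ⟨x, hx, rfl⟩
          have h1 : idx x = j := huniq _ _ hx
          have h2 : t x = x := htfix x (by rw [h1]; exact hj)
          have h3 := hgmem x
          rwa [h2, h1] at h3
        · intro hy
          have hfy : f y ∈ B j := (hIspec j hj).1 ▸ ⟨y, hy, rfl⟩
          refine ⟨f y, hfy, ?_⟩
          have h1 : idx (f y) = j := huniq _ _ hfy
          have h2 : t (f y) = f y := htfix _ (by rw [h1]; exact hj)
          have hm2 := hgmem (f y)
          rw [h2, h1] at hm2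
          exact (hIspec j hj).2 hm2 hy (by rw [hgf, h2])
      · obtain ⟨m, hm⟩ := hf j
        have hmI : ImB m := ⟨j, hm⟩
        refine ⟨I m, ?_⟩
        ext y; constructor
        · rintro ⟨x, hx, rfl⟩
          have h1 : idx x = j := huniq _ _ hx
          have h2 : t x = f x := by
            simp only [ht, h1, if_neg hj]
          have hfx : f x ∈ B m := hm ▸ ⟨x, hx, rfl⟩
          have h3 : idx (f x) = m := huniq _ _ hfx
          have h4 := hgmem x
          rwa [h2, h3] at h4
        · intro hy
          have hfy : f y ∈ B m := (hIspec m hmI).1 ▸ ⟨y, hy, rfl⟩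
          rw [← hm] at hfy
          obtain ⟨x, hx, hfx⟩ := hfy
          refine ⟨x, hx, ?_⟩
          have h1 : idx x = j := huniq _ _ hx
          have h2 : t x = f x := by
            simp only [ht, h1, if_neg hj]
          have hfxm : f x ∈ B m := hm ▸ ⟨x, hx, rfl⟩
          have h3 : idx (f x) = m := huniq _ _ hfxm
          have hgm := hgmem x
          rw [h2, h3] at hgm
          exact (hIspec m hmI).2 hgm hy (by rw [hgf, h2, hfx])
    · funext x
      have himx : ImB (idx (f x)) := by
        obtain ⟨m, hm⟩ := hf (idx x)
        have hfx : f x ∈ B m := hm ▸ ⟨x, hmem x, rfl⟩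
        rw [huniq _ _ hfx]
        exact ⟨idx x, hm⟩
      have h2 : t (f x) = f x := htfix _ himx
      show f (g (f x)) = f x
      rw [hgf, h2]
end

section
/- If P is a uniform m-partition of a finite set X (all blocks have equal size), then the semigroup Γ(X,P) is regular: for every f ∈ Γ(X,P) there exists g ∈ Γ(X,P) with f = f∘g∘f. -/
/-- For a uniform partition of a finite set, Γ(X,P) is regular. -/
theorem gamma_regular_of_uniform {X : Type*} [Finite X] {m : ℕ} (B : Fin m → Set X)
    (hP : IsPartition B) (huniform : ∀ i j, Nat.card (B i) = Nat.card (B j)) :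
    ∀ f : X → X, MapsOnto B f → ∃ g, MapsOnto B g ∧ f ∘ g ∘ f = f := by
  classical
  obtain ⟨hne, hdisj, huniv⟩ := hP
  intro f hf
  rcases Nat.eq_zero_or_pos m with hm | hm
  · -- X is empty
    have hX : IsEmpty X := by
      constructor
      intro x
      have hx : x ∈ ⋃ i, B i := huniv ▸ Set.mem_univ x
      obtain ⟨i, -⟩ := Set.mem_iUnion.mp hx
      exact absurd i.2 (by omega)
    exact ⟨f, hf, funext fun x => (hX.false x).elim⟩
  -- choose σ with f '' B i = B (σ i)
  choose σ hσ using hf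
  have fmem : ∀ i, ∀ x ∈ B i, f x ∈ B (σ i) := fun i x hx =>
    (hσ i) ▸ Set.mem_image_of_mem f hx
  -- every x lies in a block, uniquely
  have hidx' : ∀ x : X, ∃ i, x ∈ B i := fun x =>
    Set.mem_iUnion.mp (huniv ▸ Set.mem_univ x)
  choose idx hidx using hidx'
  have hconst : ∀ (j : Fin m) (x : X), x ∈ B j → idx x = j := by
    intro j x hx
    by_contra h
    exact Set.disjoint_left.mp (hdisj h) (hidx x) hx
  -- for each block j, pick a target block and a bijection, compatible with f
  have key : ∀ j : Fin m, ∃ (i : Fin m) (e : (B j : Set X) ≃ (B i : Set X)),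
      ∀ y : (B j : Set X), (∃ i', σ i' = j) → f (e y : X) = (y : X) := by
    intro j
    by_cases h : ∃ i', σ i' = j
    · obtain ⟨i, hi⟩ := h
      -- f restricted to B i is a bijection onto B j
      have hmem : ∀ x : (B i : Set X), f (x : X) ∈ B j := fun x => by
        rw [← hi]; exact fmem i x x.2
      let f' : ↥(B i) → ↥(B j) := fun x => ⟨f (x : X), hmem x⟩
      have hsurj : Function.Surjective f' := by
        rintro ⟨y, hy⟩
        have : y ∈ f '' B i := by rw [hσ i, hi]; exact hy
        obtain ⟨x, hx, hfx⟩ := this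
        exact ⟨⟨x, hx⟩, Subtype.ext hfx⟩
      have hbij : Function.Bijective f' :=
        (Nat.bijective_iff_surjective_and_card f').mpr ⟨hsurj, huniform i j⟩
      refine ⟨i, (Equiv.ofBijective f' hbij).symm, fun y _ => ?_⟩
      have := (Equiv.ofBijective f' hbij).apply_symm_apply y
      exact congrArg Subtype.val this
    · -- arbitrary bijection onto the block B ⟨0, hm⟩
      have := Fintype.ofFinite (B j : Set X)
      have := Fintype.ofFinite (B (⟨0, hm⟩ : Fin m) : Set X)
      have hcard : Fintype.card (B j : Set X) = Fintype.card (B (⟨0, hm⟩ : Fin m) : Set X) := by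
        rw [← Nat.card_eq_fintype_card, ← Nat.card_eq_fintype_card]
        exact huniform j ⟨0, hm⟩
      exact ⟨⟨0, hm⟩, Fintype.equivOfCardEq hcard, fun y hy => absurd hy h⟩
  choose τ e he using key
  -- define g
  set g : X → X := fun x => (e (idx x) ⟨x, hidx x⟩ : X) with hg
  have gspec : ∀ (j : Fin m) (x : X) (hx : x ∈ B j), g x = (e j ⟨x, hx⟩ : X) := by
    intro j x hx
    have h := hconst j x hx
    subst h
    simp only [hg]
  refine ⟨g, ?_, ?_⟩
  · -- MapsOnto B g
    intro j
    refine ⟨τ j, Set.eq_of_subset_of_subset ?_ ?_⟩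
    · rintro y ⟨x, hx, rfl⟩
      rw [gspec j x hx]
      exact (e j ⟨x, hx⟩).2
    · intro y hy
      refine ⟨((e j).symm ⟨y, hy⟩ : X), ((e j).symm ⟨y, hy⟩).2, ?_⟩
      rw [gspec j _ ((e j).symm ⟨y, hy⟩).2]
      have : (⟨((e j).symm ⟨y, hy⟩ : X), ((e j).symm ⟨y, hy⟩).2⟩ :
          (B j : Set X)) = (e j).symm ⟨y, hy⟩ := Subtype.ext rfl
      rw [this, (e j).apply_symm_apply]
  · -- f ∘ g ∘ f = f
    funext x
    have hx : f x ∈ B (σ (idx x)) := fmem (idx x) x (hidx x)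
    have h1 : g (f x) = (e (σ (idx x)) ⟨f x, hx⟩ : X) := gspec _ _ hx
    simp only [Function.comp_apply, h1]
    exact he (σ (idx x)) ⟨f x, hx⟩ ⟨idx x, rfl⟩
end

section
/- If P is a partition of a finite set X with at most two blocks, then the semigroup Γ(X,P) is regular. -/
/-- If P has at most two blocks (X finite), then Γ(X,P) is regular. -/
theorem gamma_regular_of_le_two_blocks {X ι : Type*} [Finite X] [Finite ι]
    (B : ι → Set X) (hP : IsPartition B) (hcard : Nat.card ι ≤ 2) :
    ∀ f : X → X, MapsOnto B f → ∃ g, MapsOnto B g ∧ f ∘ g ∘ f = f := by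
  classical
  obtain ⟨hne, hdisj, hcover⟩ := hP
  intro f hf
  choose σ hσ using hf
  -- every x lies in a unique block
  have hblk' : ∀ x : X, ∃ i, x ∈ B i := by
    intro x
    have : x ∈ ⋃ i, B i := by rw [hcover]; trivial
    exact Set.mem_iUnion.mp this
  choose blk hblkmem using hblk'
  have hblk_eq : ∀ {x : X} {i : ι}, x ∈ B i → blk x = i := by
    intro x i hx
    by_contra h
    exact Set.disjoint_left.mp (hdisj h) (hblkmem x) hx
  -- σ³ = σ since |ι| ≤ 2
  have hσ3 : ∀ i, σ (σ (σ i)) = σ i := by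
    intro i
    by_cases h1 : σ i = i
    · simp [h1]
    by_cases h2 : σ (σ i) = i
    · rw [h2]
    by_cases h3 : σ (σ i) = σ i
    · rw [h3, h3]
    exfalso
    have := Fintype.ofFinite ι
    have hsub : ({i, σ i, σ (σ i)} : Finset ι) ⊆ Finset.univ := Finset.subset_univ _
    have hc3 : ({i, σ i, σ (σ i)} : Finset ι).card = 3 := by
      rw [Finset.card_insert_of_notMem (by simp [Ne.symm h1, Ne.symm h2]),
        Finset.card_insert_of_notMem (by simp [Ne.symm h3]), Finset.card_singleton]
    have := Finset.card_le_card hsub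
    rw [hc3, Finset.card_univ, ← Nat.card_eq_fintype_card] at this
    omega
  -- cardinalities
  have hncard : ∀ k, (B (σ k)).ncard = (B (σ (σ k))).ncard := by
    intro k
    have h1 : (B (σ (σ k))).ncard ≤ (B (σ k)).ncard := by
      rw [← hσ (σ k)]
      exact Set.ncard_image_le (Set.toFinite _)
    have h2 : (B (σ k)).ncard ≤ (B (σ (σ k))).ncard := by
      have : (B (σ k)).ncard = (f '' B (σ (σ k))).ncard := by
        rw [hσ, hσ3]
      rw [this]
      exact Set.ncard_image_le (Set.toFinite _)
    omega
  -- preimages for x in "range" blocks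
  have hpre : ∀ x : X, σ (σ (blk x)) = blk x → ∃ y ∈ B (σ (blk x)), f y = x := by
    intro x hx
    have : x ∈ f '' B (σ (blk x)) := by rw [hσ, hx]; exact hblkmem x
    obtain ⟨y, hy, hfy⟩ := this
    exact ⟨y, hy, hfy⟩
  set g : X → X := fun x =>
    if h : σ (σ (blk x)) = blk x then (hpre x h).choose else x with hgdef
  have hg1 : ∀ x (h : σ (σ (blk x)) = blk x), g x ∈ B (σ (blk x)) ∧ f (g x) = x := by
    intro x h
    have : g x = (hpre x h).choose := by rw [hgdef]; simp [h]
    rw [this]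
    exact ⟨(hpre x h).choose_spec.1, (hpre x h).choose_spec.2⟩
  have hg2 : ∀ x, ¬ σ (σ (blk x)) = blk x → g x = x := by
    intro x h
    rw [hgdef]; simp [h]
  refine ⟨g, ?_, ?_⟩
  · -- MapsOnto
    intro i
    by_cases hc : σ (σ i) = i
    · refine ⟨σ i, ?_⟩
      have hcond : ∀ x ∈ B i, σ (σ (blk x)) = blk x := by
        intro x hx; rw [hblk_eq hx]; exact hc
      have hsub : g '' B i ⊆ B (σ i) := by
        rintro y ⟨x, hx, rfl⟩
        have := (hg1 x (hcond x hx)).1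
        rwa [hblk_eq hx] at this
      have hinj : Set.InjOn g (B i) := by
        intro x1 h1 x2 h2 he
        have e1 := (hg1 x1 (hcond x1 h1)).2
        have e2 := (hg1 x2 (hcond x2 h2)).2
        rw [← e1, ← e2, he]
      have hcards : (B (σ i)).ncard ≤ (g '' B i).ncard := by
        rw [Set.ncard_image_of_injOn hinj, hncard i, hc]
      exact (Set.eq_of_subset_of_ncard_le hsub hcards (Set.toFinite _)).symm ▸ rfl
    · refine ⟨i, ?_⟩
      have : ∀ x ∈ B i, g x = x := by
        intro x hx
        exact hg2 x (by rw [hblk_eq hx]; exact hc)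
      calc g '' B i = id '' B i := Set.image_congr this
        _ = B i := Set.image_id _
  · -- f ∘ g ∘ f = f
    funext x
    have hfx : blk (f x) = σ (blk x) := by
      apply hblk_eq
      rw [← hσ]
      exact Set.mem_image_of_mem f (hblkmem x)
    have hcond : σ (σ (blk (f x))) = blk (f x) := by
      rw [hfx]; exact hσ3 (blk x)
    exact (hg1 (f x) hcond).2
end

section
/- Let P be an m-partition of a finite set X. Then every regular element of Γ(X,P) is unit-regular: if f ∈ Γ(X,P) and f = f g f for some g ∈ Γ(X,P), then there exists a unit u ∈ S(X,P) with f = f u f. -/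
/-- Auxiliary: an injection on a finite set preserving a weight extends to a
weight-preserving permutation. -/
lemma exists_perm_extend {α : Type*} [DecidableEq α] (w : α → ℕ) (t : α → α) :
    ∀ S : Finset α, Set.InjOn t S → (∀ k ∈ S, w (t k) = w k) →
    ∃ π : Equiv.Perm α, (∀ k ∈ S, π k = t k) ∧ ∀ k, w (π k) = w k := by
  intro S
  induction S using Finset.induction_on with
  | empty => exact fun _ _ => ⟨1, by simp, by simp⟩
  | @insert a S' ha IH =>
    intro hinj hw
    obtain ⟨π', h1, h2⟩ := IH
      (hinj.mono (by simp [Set.subset_insert])) (fun k hk => hw k (Finset.mem_insert_of_mem hk))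
    set b := π'.symm (t a) with hb
    have hbS' : b ∉ S' := by
      intro hbS'
      have : t a = t b := by rw [← h1 b hbS', hb, Equiv.apply_symm_apply]
      have : a = b := hinj (by simp) (by simp [hbS']) this
      exact ha (this ▸ hbS')
    have hwab : w a = w b := by
      have := h2 b
      rw [hb, Equiv.apply_symm_apply] at this
      rw [← this, hw a (Finset.mem_insert_self a S')]
    refine ⟨π' * Equiv.swap a b, ?_, ?_⟩
    · intro k hk
      rcases Finset.mem_insert.mp hk with rfl | hk
      · simp [Equiv.Perm.mul_apply, Equiv.swap_apply_left, hb]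
      · have hka : k ≠ a := fun h => ha (h ▸ hk)
        have hkb : k ≠ b := fun h => hbS' (h ▸ hk)
        simp [Equiv.Perm.mul_apply, Equiv.swap_apply_of_ne_of_ne hka hkb, h1 k hk]
    · intro k
      have : w (Equiv.swap a b k) = w k := by
        rcases eq_or_ne k a with rfl | hka
        · simp [Equiv.swap_apply_left, hwab]
        rcases eq_or_ne k b with rfl | hkb
        · simp [Equiv.swap_apply_right, hwab]
        · rw [Equiv.swap_apply_of_ne_of_ne hka hkb]
      rw [Equiv.Perm.mul_apply, h2, this]

/-- For finite X, every regular element of Γ(X,P) is unit-regular. -/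
theorem gamma_regular_is_unitRegular {X : Type*} [Finite X] {m : ℕ} (B : Fin m → Set X)
    (hP : IsPartition B) (f : X → X) (hf : MapsOnto B f)
    (hreg : ∃ g, MapsOnto B g ∧ f ∘ g ∘ f = f) :
    ∃ u, IsUnitT B u ∧ f ∘ u ∘ f = f := by
  classical
  obtain ⟨g, hg, hfgf⟩ := hreg
  obtain ⟨hne, hdisj, huniv⟩ := hP
  -- every point lies in a (unique) block
  have hblk' : ∀ x : X, ∃ i, x ∈ B i := by
    intro x
    have : x ∈ ⋃ i, B i := huniv ▸ Set.mem_univ x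
    simpa using this
  choose blk hblkmem using hblk'
  have hBeq : ∀ {i j : Fin m}, B i = B j → i = j := by
    intro i j h
    by_contra hij
    obtain ⟨x, hx⟩ := hne i
    exact Set.disjoint_left.mp (hdisj hij) hx (h ▸ hx)
  have hblk_eq : ∀ {x : X} {i : Fin m}, x ∈ B i → blk x = i := by
    intro x i hx
    by_contra h
    exact Set.disjoint_left.mp (hdisj h) (hblkmem x) hx
  choose σ hσ using hf
  choose τ hτ using hg
  -- on blocks in the range of f, g is a section of f
  have hfg : ∀ {k : Fin m}, k ∈ Set.range σ → ∀ y ∈ B k, f (g y) = y := by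
    rintro k ⟨i, rfl⟩ y hy
    rw [← hσ i] at hy
    obtain ⟨x, _, rfl⟩ := hy
    exact congrFun hfgf x
  have hstau : ∀ k ∈ Set.range σ, σ (τ k) = k := by
    intro k hk
    apply hBeq
    rw [← hσ (τ k), ← hτ k, ← Set.image_comp]
    calc (f ∘ g) '' B k = id '' B k := Set.image_congr (fun y hy => hfg hk y hy)
    _ = B k := Set.image_id _
  have hbij : ∀ k ∈ Set.range σ, Set.BijOn g (B k) (B (τ k)) := by
    intro k hk
    refine ⟨Set.mapsTo_iff_image_subset.mpr (hτ k).le, ?_, (hτ k).ge⟩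
    intro y hy y' hy' hgy
    have := hfg hk y hy
    rw [hgy, hfg hk y' hy'] at this
    exact this.symm
  -- the weight-preserving permutation of block indices
  set w : Fin m → ℕ := fun k => Nat.card (B k) with hw
  have hwt : ∀ k ∈ (Finset.univ.image σ), w (τ k) = w k := by
    intro k hk
    have hk' : k ∈ Set.range σ := by simpa using hk
    exact (Nat.card_congr ((hbij k hk').equiv g)).symm
  have htinj : Set.InjOn τ (Finset.univ.image σ) := by
    intro k hk k' hk' h
    have hk1 : k ∈ Set.range σ := by simpa using hk
    have hk2 : k' ∈ Set.range σ := by simpa using hk'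
    rw [← hstau k hk1, h, hstau k' hk2]
  obtain ⟨π, hπ1, hπ2⟩ := exists_perm_extend w τ (Finset.univ.image σ) htinj hwt
  -- blockwise bijections
  have hexe : ∀ k : Fin m, ∃ e : (B k) ≃ (B (π k)),
      ∀ _ : k ∈ Set.range σ, ∀ x : B k, (e x : X) = g x := by
    intro k
    by_cases hk : k ∈ Set.range σ
    · have hb := hbij k hk
      have hπk : π k = τ k := by
        refine hπ1 k ?_
        obtain ⟨i, rfl⟩ := hk
        exact Finset.mem_image.mpr ⟨i, Finset.mem_univ i, rfl⟩
      refine ⟨(hb.equiv g).trans (Equiv.setCongr (by rw [hπk])), fun _ x => ?_⟩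
      simp [Set.BijOn.equiv, Equiv.ofBijective]
    · have h1 : Nat.card (B k) = Nat.card (B (π k)) := (hπ2 k).symm
      have f1 : Fintype (B k) := Fintype.ofFinite _
      have f2 : Fintype (B (π k)) := Fintype.ofFinite _
      have h2 : Fintype.card (B k) = Fintype.card (B (π k)) := by
        rwa [Nat.card_eq_fintype_card, Nat.card_eq_fintype_card] at h1
      exact ⟨Fintype.equivOfCardEq h2, fun hk' => absurd hk' hk⟩
  choose e he using hexe
  set u : X → X := fun x => (e (blk x) ⟨x, hblkmem x⟩ : X) with hu
  have hval : ∀ (k : Fin m) (x : X) (hx : x ∈ B k), u x = (e k ⟨x, hx⟩ : X) := by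
    intro k x hx
    have hk := hblk_eq hx
    subst hk
    rfl
  have humem : ∀ x : X, u x ∈ B (π (blk x)) := fun x => (e (blk x) ⟨x, hblkmem x⟩).2
  have hblku : ∀ x : X, blk (u x) = π (blk x) := fun x => hblk_eq (humem x)
  -- u is bijective
  have huinj : Function.Injective u := by
    intro x x' hxx
    have hbb : blk x = blk x' := by
      have := hblku x
      rw [hxx, hblku x'] at this
      exact π.injective this.symm
    have hx' : x' ∈ B (blk x) := hbb ▸ hblkmem x'
    rw [hval (blk x) x (hblkmem x), hval (blk x) x' hx'] at hxx
    have := (e (blk x)).injective (Subtype.coe_injective hxx)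
    exact congrArg Subtype.val this
  have husurj : Function.Surjective u := by
    intro y
    have hy' : y ∈ B (π (π.symm (blk y))) := by
      rw [Equiv.apply_symm_apply]; exact hblkmem y
    refine ⟨((e (π.symm (blk y))).symm ⟨y, hy'⟩ : X), ?_⟩
    rw [hval (π.symm (blk y)) _ ((e (π.symm (blk y))).symm ⟨y, hy'⟩).2]
    exact congrArg Subtype.val ((e (π.symm (blk y))).apply_symm_apply ⟨y, hy'⟩)
  have hubij : Function.Bijective u := ⟨huinj, husurj⟩
  set u' : X → X := fun y => (Equiv.ofBijective u hubij).symm y with hu'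
  have huu' : ∀ y, u (u' y) = y := fun y => (Equiv.ofBijective u hubij).apply_symm_apply y
  have hu'u : ∀ x, u' (u x) = x := fun x => (Equiv.ofBijective u hubij).symm_apply_apply x
  refine ⟨u, ⟨?_, u', ?_, ?_, ?_⟩, ?_⟩
  · -- MapsInto B u
    intro i
    refine ⟨π i, ?_⟩
    rintro y ⟨x, hx, rfl⟩
    rw [hval i x hx]
    exact (e i ⟨x, hx⟩).2
  · -- MapsInto B u'
    intro j
    refine ⟨π.symm j, ?_⟩
    rintro y ⟨z, hz, rfl⟩
    have h1 : blk z = j := hblk_eq hz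
    have h2 : π (blk (u' z)) = j := by rw [← hblku (u' z), huu' z, h1]
    have : blk (u' z) = π.symm j := by rw [← h2, Equiv.symm_apply_apply]
    exact this ▸ hblkmem (u' z)
  · exact funext huu'
  · exact funext hu'u
  · -- f ∘ u ∘ f = f
    funext x
    have hfx : f x ∈ B (σ (blk x)) := by
      rw [← hσ (blk x)]; exact ⟨x, hblkmem x, rfl⟩
    have h1 : u (f x) = g (f x) := by
      rw [hval (σ (blk x)) (f x) hfx]
      exact he (σ (blk x)) ⟨blk x, rfl⟩ ⟨f x, hfx⟩
    show f (u (f x)) = f x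
    rw [h1]
    exact congrFun hfgf x
end

section
/- Let P be an (m,k)-partition of a finite set X with m_i blocks of size n_i for each i ∈ {1,...,k}, where n_1 < n_2 < ... < n_k and m = m_1 + ... + m_k. Then the number of self-maps of X mapping every block onto a block equals |Γ(X,P)| = ∏_{i=1}^{k} ( Σ_{j=1}^{i} m_j · n_j! · S(n_i, n_j) )^{m_i}, where S(a,b) is the Stirling number of the second kind. -/
lemma stirling2_eq_zero_of_lt : ∀ {n k : ℕ}, n < k → stirling2 n k = 0
  | 0, _ + 1, _ => rfl
  | n + 1, k + 1, h => by
    have h1 : n < k + 1 := by omega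
    have h2 : n < k := by omega
    simp [stirling2, stirling2_eq_zero_of_lt h1, stirling2_eq_zero_of_lt h2]

lemma nat_card_sigma {ι : Type*} [Fintype ι] (F : ι → Type*) [∀ i, Finite (F i)] :
    Nat.card (Σ i, F i) = ∑ i, Nat.card (F i) := by
  have := fun i => Fintype.ofFinite (F i)
  simp [Nat.card_eq_fintype_card]

lemma card_subtype_split {α : Type*} [Finite α] (P Q : α → Prop) :
    Nat.card {a // P a} = Nat.card {a // P a ∧ Q a} + Nat.card {a // P a ∧ ¬ Q a} := by
  classical
  rw [← Nat.card_sum]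
  exact Nat.card_congr ((Equiv.sumCompl fun x : {a // P a} => Q x.1).symm.trans
    (Equiv.sumCongr (Equiv.subtypeSubtypeEquivSubtypeInter P Q)
      (Equiv.subtypeSubtypeEquivSubtypeInter P fun a => ¬ Q a)))

universe u

/-- decompose a surjection from `Fin (m+1)` as value at 0 plus rest. -/
def consSurj {m : ℕ} {β : Type u}
    (p : Σ y : β, {h : Fin m → β // ∀ b, b ≠ y → b ∈ Set.range h}) :
    {g : Fin (m+1) → β // Function.Surjective g} :=
  ⟨Fin.cases p.1 p.2.1, by
    intro b
    by_cases hb : b = p.1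
    · exact ⟨0, by simp [hb]⟩
    · obtain ⟨a, ha⟩ := p.2.2 b hb
      exact ⟨a.succ, by simpa using ha⟩⟩

lemma consSurj_bijective {m : ℕ} {β : Type u} :
    Function.Bijective (consSurj (m := m) (β := β)) := by
  constructor
  · rintro ⟨y₁, h₁, hh₁⟩ ⟨y₂, h₂, hh₂⟩ he
    have he' : (Fin.cases y₁ h₁ : Fin (m+1) → β) = Fin.cases y₂ h₂ :=
      congrArg Subtype.val he
    have h0 : y₁ = y₂ := by have := congrFun he' 0; simpa using this
    subst h0
    have hs : h₁ = h₂ := funext fun i => by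
      have := congrFun he' i.succ; simpa using this
    subst hs
    rfl
  · rintro ⟨g, hg⟩
    refine ⟨⟨g 0, ⟨fun i => g i.succ, ?_⟩⟩, ?_⟩
    · intro b hb
      obtain ⟨x, hx⟩ := hg b
      rcases Fin.eq_zero_or_eq_succ x with h0 | ⟨a, rfl⟩
      · exact absurd (h0 ▸ hx).symm hb
      · exact ⟨a, hx⟩
    · refine Subtype.ext (funext fun x => ?_)
      induction x using Fin.cases with
      | zero => simp [consSurj]
      | succ i => simp [consSurj]

/-- surjections onto the complement of `y` as maps missing exactly `y`. -/
def misses {m : ℕ} {β : Type u} (y : β)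
    (h' : {h : Fin m → {b : β // b ≠ y} // Function.Surjective h}) :
    {h : Fin m → β // (∀ b, b ≠ y → b ∈ Set.range h) ∧ y ∉ Set.range h} :=
  ⟨fun i => (h'.1 i).1, by
    constructor
    · intro b hb
      obtain ⟨i, hi⟩ := h'.2 ⟨b, hb⟩
      exact ⟨i, congrArg Subtype.val hi⟩
    · rintro ⟨i, hi⟩
      exact (h'.1 i).2 hi⟩

lemma misses_bijective {m : ℕ} {β : Type u} (y : β) :
    Function.Bijective (misses (m := m) y) := by
  constructor
  · rintro ⟨h₁, hs₁⟩ ⟨h₂, hs₂⟩ he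
    have he' := congrArg Subtype.val he
    exact Subtype.ext (funext fun i => Subtype.ext (congrFun he' i))
  · rintro ⟨h, hcond, hy⟩
    refine ⟨⟨fun i => ⟨h i, fun e => hy ⟨i, e⟩⟩, ?_⟩, Subtype.ext rfl⟩
    rintro ⟨b, hb⟩
    obtain ⟨i, hi⟩ := hcond b hb
    exact ⟨i, Subtype.ext hi⟩

lemma card_surj_fin : ∀ (m : ℕ) (β : Type u) [Finite β],
    Nat.card {g : Fin m → β // Function.Surjective g}
      = (Nat.card β).factorial * stirling2 m (Nat.card β) := by
  intro m
  induction m with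
  | zero =>
    intro β _
    rcases isEmpty_or_nonempty β with h | h
    · have hc : Nat.card β = 0 := Nat.card_of_isEmpty
      have : Unique {g : Fin 0 → β // Function.Surjective g} :=
        ⟨⟨⟨fun i => i.elim0, fun b => (h.false b).elim⟩⟩,
          fun g => Subtype.ext (funext fun i => i.elim0)⟩
      rw [hc, Nat.card_unique]
      rfl
    · have hpos : 0 < Nat.card β := Nat.card_pos
      obtain ⟨c, hc⟩ := Nat.exists_eq_succ_of_ne_zero hpos.ne'
      have : IsEmpty {g : Fin 0 → β // Function.Surjective g} :=
        ⟨fun g => by obtain ⟨a, _⟩ := g.2 h.some; exact a.elim0⟩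
      rw [Nat.card_of_isEmpty, hc]
      simp [stirling2]
  | succ m ih =>
    intro β _
    rcases isEmpty_or_nonempty β with h | h
    · have hc : Nat.card β = 0 := Nat.card_of_isEmpty
      have : IsEmpty {g : Fin (m+1) → β // Function.Surjective g} :=
        ⟨fun g => h.false (g.1 0)⟩
      rw [Nat.card_of_isEmpty, hc]
      simp [stirling2]
    · have hpos : 0 < Nat.card β := Nat.card_pos
      obtain ⟨c, hc⟩ := Nat.exists_eq_succ_of_ne_zero hpos.ne'
      classical
      have hft : Fintype β := Fintype.ofFinite β
      rw [← Nat.card_congr (Equiv.ofBijective _ (consSurj_bijective (m := m) (β := β))),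
        nat_card_sigma]
      have hfib : ∀ y : β, Nat.card {h : Fin m → β // ∀ b, b ≠ y → b ∈ Set.range h} =
          (c+1).factorial * stirling2 m (c+1) + c.factorial * stirling2 m c := by
        intro y
        rw [card_subtype_split _ (fun h => y ∈ Set.range h)]
        congr 1
        · have e : Nat.card {h : Fin m → β //
              (∀ b, b ≠ y → b ∈ Set.range h) ∧ y ∈ Set.range h} =
              Nat.card {h : Fin m → β // Function.Surjective h} := by
            refine Nat.card_congr (Equiv.subtypeEquivRight fun h => ?_)
            constructor
            · rintro ⟨h1, h2⟩ b
              by_cases hb : b = y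
              · exact hb ▸ h2
              · exact h1 b hb
            · intro hs
              exact ⟨fun b _ => hs b, hs y⟩
          rw [e, ih, hc]
        · have hcompl : Nat.card {b : β // b ≠ y} = c := by
            have h1 : Fintype.card {b : β // b ≠ y} =
                Fintype.card β - Fintype.card {b : β // b = y} :=
              Fintype.card_subtype_compl _
            have h2 : Fintype.card β = c + 1 := by
              rw [← Nat.card_eq_fintype_card, hc]
            rw [Nat.card_eq_fintype_card, h1, h2, Fintype.card_subtype_eq]; omega
          rw [← Nat.card_congr (Equiv.ofBijective _ (misses_bijective (m := m) y)), ih, hcompl]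
      rw [Finset.sum_congr rfl (fun y _ => hfib y), Finset.sum_const, Finset.card_univ,
        ← Nat.card_eq_fintype_card, hc]
      show (c + 1) * _ = _
      simp only [stirling2, Nat.factorial_succ]
      ring

lemma card_surj (α : Type*) (β : Type*) [Finite α] [Finite β] :
    Nat.card {g : α → β // Function.Surjective g}
      = (Nat.card β).factorial * stirling2 (Nat.card α) (Nat.card β) := by
  rw [← card_surj_fin]
  refine Nat.card_congr (Equiv.subtypeEquiv
    (Equiv.arrowCongr (Finite.equivFin α) (Equiv.refl β)) fun g => ?_)
  constructor
  · intro hs b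
    obtain ⟨a, ha⟩ := hs b
    exact ⟨Finite.equivFin α a, by simp [Equiv.arrowCongr, ha]⟩
  · intro hs b
    obtain ⟨a, ha⟩ := hs b
    exact ⟨(Finite.equivFin α).symm a, by simpa [Equiv.arrowCongr] using ha⟩

section Main

variable {X ι : Type*} (B : ι → Set X)

/-- package a surjection onto a block as a map whose range is a block. -/
def blockSigma (b : ι) (p : Σ b' : ι, {g : ↥(B b) → ↥(B b') // Function.Surjective g}) :
    {g : ↥(B b) → X // ∃ b', Set.range g = B b'} :=
  ⟨fun x => (p.2.1 x).1, ⟨p.1, by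
    rw [show (fun x : ↥(B b) => ((p.2.1 x : ↥(B p.1)) : X)) = Subtype.val ∘ p.2.1 from rfl,
      p.2.2.range_comp, Subtype.range_coe]⟩⟩

lemma blockSigma_bijective (hne : ∀ i, (B i).Nonempty)
    (hdis : Pairwise fun i j => Disjoint (B i) (B j)) (b : ι) :
    Function.Bijective (blockSigma B b) := by
  have hBinj : ∀ {b₁ b₂ : ι}, B b₁ = B b₂ → b₁ = b₂ := by
    intro b₁ b₂ hB
    by_contra hne'
    obtain ⟨x, hx⟩ := hne b₁
    exact Set.disjoint_left.mp (hdis hne') hx (hB ▸ hx)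
  constructor
  · rintro ⟨b₁, h₁, hs₁⟩ ⟨b₂, h₂, hs₂⟩ he
    have he' := congrArg Subtype.val he
    have r1 : Set.range (fun x : ↥(B b) => ((h₁ x : ↥(B b₁)) : X)) = B b₁ := by
      rw [show (fun x : ↥(B b) => ((h₁ x : ↥(B b₁)) : X)) = Subtype.val ∘ h₁ from rfl,
        hs₁.range_comp, Subtype.range_coe]
    have r2 : Set.range (fun x : ↥(B b) => ((h₂ x : ↥(B b₂)) : X)) = B b₂ := by
      rw [show (fun x : ↥(B b) => ((h₂ x : ↥(B b₂)) : X)) = Subtype.val ∘ h₂ from rfl,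
        hs₂.range_comp, Subtype.range_coe]
    have hr : B b₁ = B b₂ := by rw [← r1, ← r2]; exact congrArg Set.range he'
    obtain rfl := hBinj hr
    have heq : h₁ = h₂ := funext fun x => Subtype.ext (congrFun he' x)
    subst heq
    rfl
  · rintro ⟨g, b', hr⟩
    refine ⟨⟨b', ⟨fun x => ⟨g x, hr ▸ Set.mem_range_self x⟩, ?_⟩⟩, Subtype.ext rfl⟩
    rintro ⟨y, hy⟩
    rw [← hr] at hy
    obtain ⟨x, hx⟩ := hy
    exact ⟨x, Subtype.ext hx⟩

/-- restriction of an onto-block map to the blocks. -/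
def restrictMaps (f : {f : X → X // MapsOnto B f}) :
    ∀ b, {g : ↥(B b) → X // ∃ b', Set.range g = B b'} :=
  fun b => ⟨fun x => f.1 x.1, by
    obtain ⟨j, hj⟩ := f.2 b
    exact ⟨j, (Set.image_eq_range _ _).symm.trans hj⟩⟩

lemma restrictMaps_bijective (hP : IsPartition B) :
    Function.Bijective (restrictMaps B) := by
  obtain ⟨hne, hdis, hcov⟩ := hP
  have hex : ∀ x : X, ∃ b, x ∈ B b := fun x => Set.mem_iUnion.mp (by rw [hcov]; trivial)
  choose idx hidx using hex
  have huniq : ∀ {b x}, x ∈ B b → idx x = b := by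
    intro b x hb
    by_contra hne'
    exact Set.disjoint_left.mp (hdis hne') (hidx x) hb
  constructor
  · rintro ⟨f₁, h₁⟩ ⟨f₂, h₂⟩ he
    refine Subtype.ext (funext fun x => ?_)
    exact congrFun (congrArg Subtype.val (congrFun he (idx x))) ⟨x, hidx x⟩
  · intro G
    have key : ∀ (b) (x : X) (hx : x ∈ B b), (G (idx x)).1 ⟨x, hidx x⟩ = (G b).1 ⟨x, hx⟩ := by
      intro b x hx
      have hb : idx x = b := huniq hx
      subst hb
      rfl
    refine ⟨⟨fun x => (G (idx x)).1 ⟨x, hidx x⟩, ?_⟩, ?_⟩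
    · intro b
      obtain ⟨j, hj⟩ := (G b).2
      refine ⟨j, ?_⟩
      rw [Set.image_eq_range, ← hj]
      have hfun : (fun x : ↥(B b) => (G (idx x.1)).1 ⟨x.1, hidx x.1⟩) = (G b).1 :=
        funext fun x => key b x.1 x.2
      rw [← hfun]
    · funext b
      refine Subtype.ext (funext fun x => ?_)
      exact key b x.1 x.2

end Main

/-- The size of Γ(X,P) for an (m,k)-partition P with m_i blocks of size n_i
(n_1 < ⋯ < n_k). -/
theorem card_gamma {X : Type*} [Finite X] {k : ℕ} (n mcnt : Fin k → ℕ)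
    (hmono : StrictMono n)
    (B : (Σ i : Fin k, Fin (mcnt i)) → Set X) (hP : IsPartition B)
    (hsize : ∀ i t, Nat.card (B ⟨i, t⟩) = n i) :
    Nat.card {f : X → X // MapsOnto B f} =
      ∏ i : Fin k,
        (∑ j ∈ Finset.Iic i, mcnt j * (n j).factorial * stirling2 (n i) (n j)) ^ mcnt i := by
  classical
  rw [Nat.card_congr (Equiv.ofBijective _ (restrictMaps_bijective B hP)), Nat.card_pi]
  have hblock : ∀ b : Σ i : Fin k, Fin (mcnt i),
      Nat.card {g : ↥(B b) → X // ∃ b', Set.range g = B b'} =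
      ∑ j ∈ Finset.Iic b.1, mcnt j * (n j).factorial * stirling2 (n b.1) (n j) := by
    intro b
    rw [← Nat.card_congr (Equiv.ofBijective _ (blockSigma_bijective B hP.1 hP.2.1 b)),
      nat_card_sigma]
    have hterm : ∀ b' : Σ j : Fin k, Fin (mcnt j),
        Nat.card {g : ↥(B b) → ↥(B b') // Function.Surjective g} =
        (n b'.1).factorial * stirling2 (n b.1) (n b'.1) := by
      intro b'
      rw [card_surj]
      have h1 := hsize b.1 b.2
      have h2 := hsize b'.1 b'.2
      simp only [Sigma.eta] at h1 h2
      rw [h1, h2]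
    rw [Finset.sum_congr rfl fun b' _ => hterm b', ← Finset.univ_sigma_univ, Finset.sum_sigma]
    have hconst : ∀ j : Fin k,
        ∑ _t : Fin (mcnt j), (n j).factorial * stirling2 (n b.1) (n j) =
        mcnt j * ((n j).factorial * stirling2 (n b.1) (n j)) := by
      intro j
      rw [Finset.sum_const, Finset.card_univ, Fintype.card_fin, smul_eq_mul]
    rw [Finset.sum_congr rfl fun j _ => hconst j]
    have hv : ∀ j ∈ Finset.univ, j ∉ Finset.Iic b.1 →
        mcnt j * ((n j).factorial * stirling2 (n b.1) (n j)) = 0 := by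
      intro j _ hj
      have hlt : b.1 < j := by simpa using hj
      rw [stirling2_eq_zero_of_lt (hmono hlt), mul_zero, mul_zero]
    rw [← Finset.sum_subset (Finset.subset_univ _) hv]
    exact Finset.sum_congr rfl fun j _ => (mul_assoc _ _ _).symm
  rw [Finset.prod_congr rfl fun b _ => hblock b, ← Finset.univ_sigma_univ, Finset.prod_sigma]
  refine Finset.prod_congr rfl fun i _ => ?_
  show ∏ _s : Fin (mcnt i),
      (∑ j ∈ Finset.Iic i, mcnt j * (n j).factorial * stirling2 (n i) (n j)) = _
  rw [Finset.prod_const, Finset.card_univ, Fintype.card_fin]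
end
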